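/- Let A be a ring with property (SF) which satisfies the strong rank condition. Let Q be a k×m matrix over A, let F be a k×t matrix whose columns are right-linearly independent and whose column space M := R_F contains the column space R_Q, and let B be the t×m matrix with Q = F·B. Then the extension R_Q ≤ M is algebraic if and only if the left A-submodule of A^m generated by the rows of B (which is a free left A-module) has rank equal to t. -/

import Mathlib

universe u v

/-- Property (SF): every submodule of every free `A`-module is a free `A`-module. -/
def HasSF (A : Type u) [Ring A] : Prop :=
  ∀ (M : Type v) [AddCommGroup M] [Module A M], Module.Free A M →
    ∀ N : Submodule A M, Module.Free A ↥N

/-- `M` is a free factor of `N` (written `M ≤* N`): `M ≤ N` and there is a submodule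
`M' ≤ N` with `M ⊓ M' = ⊥` and `M ⊔ M' = N` such that `M'` is a free module. -/
def IsFreeFactor {A : Type*} [Ring A] {P : Type*} [AddCommGroup P] [Module A P]
    (M N : Submodule A P) : Prop :=
  M ≤ N ∧ ∃ M' : Submodule A P, M' ≤ N ∧ M ⊓ M' = ⊥ ∧ M ⊔ M' = N ∧ Module.Free A ↥M'

/-- The extension `M ≤ N` is algebraic: the only submodule `L` with `M ≤ L ≤ N`
which is a free factor of `N` is `L = N`. -/
def IsAlgExt {A : Type*} [Ring A] {P : Type*} [AddCommGroup P] [Module A P]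
    (M N : Submodule A P) : Prop :=
  M ≤ N ∧ ∀ L : Submodule A P, M ≤ L → IsFreeFactor L N → L = N

/-- The column space of a matrix `Q`: the right `A`-submodule (i.e. `Aᵐᵒᵖ`-submodule)
of `A^k` generated by the columns of `Q`. -/
def colSpace {A : Type u} [Ring A] {k m : ℕ} (Q : Matrix (Fin k) (Fin m) A) :
    Submodule Aᵐᵒᵖ (Fin k → A) :=
  Submodule.span Aᵐᵒᵖ (Set.range fun j => fun i => Q i j)

/-- The row space of a matrix `Q`: the left `A`-submodule of `A^m` generated by the
rows of `Q`. -/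
def rowSpace {A : Type u} [Ring A] {k m : ℕ} (Q : Matrix (Fin k) (Fin m) A) :
    Submodule A (Fin m → A) :=
  Submodule.span A (Set.range fun i => fun j => Q i j)

open MulOpposite LinearMap Submodule

section OpAux

variable {A : Type u} [Ring A]

/-- `A` as a right module over itself is isomorphic to `Aᵐᵒᵖ`. -/
def opLEquiv : A ≃ₗ[Aᵐᵒᵖ] Aᵐᵒᵖ where
  toFun := op
  invFun := unop
  map_add' _ _ := rfl
  map_smul' _ _ := rfl
  left_inv _ := rfl
  right_inv _ := rfl

/-- componentwise `op`. -/
def piOpLEquiv (n : ℕ) : (Fin n → A) ≃ₗ[Aᵐᵒᵖ] (Fin n → Aᵐᵒᵖ) :=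
  LinearEquiv.piCongrRight fun _ => opLEquiv

theorem free_op_pi (n : ℕ) : Module.Free Aᵐᵒᵖ (Fin n → A) :=
  Module.Free.of_equiv (piOpLEquiv n).symm

theorem free_op_self : Module.Free Aᵐᵒᵖ A :=
  Module.Free.of_equiv (opLEquiv (A := A)).symm

theorem rank_op_pi [StrongRankCondition Aᵐᵒᵖ] (n : ℕ) :
    Module.rank Aᵐᵒᵖ (Fin n → A) = n :=
  (piOpLEquiv (A := A) n).rank_eq.trans (rank_fin_fun n)

end OpAux

section GenAux

variable {R : Type u} [Ring R]

/-- A submodule with a basis indexed by an empty type is trivial. -/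
theorem eq_bot_of_basis_isEmpty {M : Type v} [AddCommGroup M] [Module R M]
    {p : Submodule R M} {ι : Type*} [IsEmpty ι] (b : Module.Basis ι R ↥p) : p = ⊥ := by
  have hsub : Subsingleton (ι →₀ R) :=
    ⟨fun f g => Finsupp.ext fun a => isEmptyElim a⟩
  have : Subsingleton ↥p := Equiv.subsingleton b.repr.toEquiv
  rw [eq_bot_iff]
  intro x hx
  have : (⟨x, hx⟩ : ↥p) = 0 := Subsingleton.elim _ _
  simpa using congrArg Subtype.val this

/-- Cardinality bound for bases of two disjoint submodules. -/
theorem card_add_card_le_rank [Nontrivial R] {M : Type u} [AddCommGroup M] [Module R M]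
    {p q : Submodule R M} (hd : Disjoint p q) {ι ι' : Type u}
    (bp : Module.Basis ι R ↥p) (bq : Module.Basis ι' R ↥q) :
    Cardinal.mk ι + Cardinal.mk ι' ≤ Module.rank R M := by
  have hip : LinearIndependent R (fun i => ((bp i : M))) :=
    bp.linearIndependent.map' p.subtype p.ker_subtype
  have hiq : LinearIndependent R (fun i => ((bq i : M))) :=
    bq.linearIndependent.map' q.subtype q.ker_subtype
  have hsp : Submodule.span R (Set.range fun i => ((bp i : M))) = p := by
    have : (Set.range fun i => ((bp i : M))) = p.subtype '' (Set.range bp) := by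
      rw [← Set.range_comp]; rfl
    rw [this, Submodule.span_image, bp.span_eq, Submodule.map_top, Submodule.range_subtype]
  have hsq : Submodule.span R (Set.range fun i => ((bq i : M))) = q := by
    have : (Set.range fun i => ((bq i : M))) = q.subtype '' (Set.range bq) := by
      rw [← Set.range_comp]; rfl
    rw [this, Submodule.span_image, bq.span_eq, Submodule.map_top, Submodule.range_subtype]
  have hind : LinearIndependent R (Sum.elim (fun i => ((bp i : M))) fun i => ((bq i : M))) :=
    hip.sum_type hiq (by rw [hsp, hsq]; exact hd)
  simpa using hind.cardinal_le_rank

/-- Splitting a linear map with free image gives a complement of the kernel. -/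
theorem exists_compl_of_free_range {M N : Type u} [AddCommGroup M] [Module R M]
    [AddCommGroup N] [Module R N] (f : M →ₗ[R] N)
    (hfree : Module.Free R ↥(LinearMap.range f)) :
    ∃ M' : Submodule R M, (LinearMap.ker f ⊓ M' = ⊥) ∧ (LinearMap.ker f ⊔ M' = ⊤) ∧
      Nonempty (↥(LinearMap.range f) ≃ₗ[R] ↥M') := by
  haveI := hfree
  haveI : Module.Projective R ↥(LinearMap.range f) := Module.Projective.of_free
  obtain ⟨h, hh⟩ := Module.projective_lifting_property f.rangeRestrict LinearMap.id
    f.surjective_rangeRestrict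
  have hcomp : ∀ y, f.rangeRestrict (h y) = y := fun y => congrFun (congrArg DFunLike.coe hh) y
  have hfh : ∀ y, f (h y) = (y : N) := fun y => congrArg Subtype.val (hcomp y)
  have hinj : Function.Injective h := by
    intro y₁ y₂ hy
    have := congrArg f.rangeRestrict hy
    rwa [hcomp, hcomp] at this
  refine ⟨LinearMap.range h, ?_, ?_, ⟨LinearEquiv.ofInjective h hinj⟩⟩
  · rw [eq_bot_iff]
    rintro x ⟨hxk, y, rfl⟩
    have hx0 : f (h y) = 0 := hxk
    have : (y : N) = 0 := by rw [← hfh y]; exact hx0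
    have hy0 : y = 0 := Subtype.ext this
    simp [hy0]
  · rw [eq_top_iff]
    intro x _
    have hmem : x - h (f.rangeRestrict x) ∈ LinearMap.ker f := by
      simp only [LinearMap.mem_ker, map_sub, hfh (f.rangeRestrict x)]
      simp [sub_eq_zero]
    refine Submodule.mem_sup.2 ⟨x - h (f.rangeRestrict x), hmem,
      h (f.rangeRestrict x), ⟨_, rfl⟩, by abel⟩

/-- Transport of algebraicity along an injective linear map. -/
theorem isAlgExt_map_iff {P P' : Type*} [AddCommGroup P] [Module R P]
    [AddCommGroup P'] [Module R P'] (ψ : P →ₗ[R] P') (hψ : Function.Injective ψ)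
    (M : Submodule R P) :
    IsAlgExt (M.map ψ) (LinearMap.range ψ) ↔ IsAlgExt M (⊤ : Submodule R P) := by
  constructor
  · rintro ⟨-, halg⟩
    refine ⟨le_top, fun L hML ⟨hLle, M', hM'le, hinf, hsup, hfree⟩ => ?_⟩
    have h1 : (L.map ψ) ⊓ (M'.map ψ) = ⊥ := by
      rw [← Submodule.map_inf _ hψ, hinf, Submodule.map_bot]
    have h2 : L.map ψ ⊔ M'.map ψ = LinearMap.range ψ := by
      rw [← Submodule.map_sup, hsup, Submodule.map_top]
    have hfree' : Module.Free R ↥(M'.map ψ) :=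
      Module.Free.of_equiv' hfree (Submodule.equivMapOfInjective ψ hψ M')
    have hLr : L.map ψ ≤ LinearMap.range ψ := by
      rw [← Submodule.map_top]; exact Submodule.map_mono le_top
    have hMr : M'.map ψ ≤ LinearMap.range ψ := by
      rw [← Submodule.map_top]; exact Submodule.map_mono le_top
    have := halg (L.map ψ) (Submodule.map_mono hML) ⟨hLr, M'.map ψ, hMr, h1, h2, hfree'⟩
    have := this.trans (Submodule.map_top ψ).symm
    exact Submodule.map_injective_of_injective hψ this
  · rintro ⟨-, halg⟩
    refine ⟨by rw [← Submodule.map_top]; exact Submodule.map_mono le_top,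
      fun L' hML' ⟨hL'le, M'', hM''le, hinf, hsup, hfree⟩ => ?_⟩
    set L : Submodule R P := L'.comap ψ with hLdef
    set N : Submodule R P := M''.comap ψ with hNdef
    have hL : L.map ψ = L' := Submodule.map_comap_eq_self hL'le
    have hN : N.map ψ = M'' := Submodule.map_comap_eq_self hM''le
    have hML : M ≤ L := fun x hx => hML' (Submodule.mem_map_of_mem hx)
    have hinf' : L ⊓ N = ⊥ := by
      rw [hLdef, hNdef, ← Submodule.comap_inf, hinf]
      rw [eq_bot_iff]
      intro x hx
      exact hψ (by simpa using hx)
    have hsup' : L ⊔ N = ⊤ := by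
      apply Submodule.map_injective_of_injective hψ
      rw [Submodule.map_sup, hL, hN, hsup, Submodule.map_top]
    have hfreeN : Module.Free R ↥N := by
      have e := Submodule.equivMapOfInjective ψ hψ N
      rw [hN] at e
      exact Module.Free.of_equiv' hfree e.symm
    have := halg L hML ⟨le_top, N, le_top, hinf', hsup', hfreeN⟩
    rw [← hL, this, Submodule.map_top]

end GenAux

section MatAux

variable {A : Type u} [Ring A]

/-- Right-linear map given by left multiplication by the matrix `F`. -/
def mulLeftLin {k t : ℕ} (F : Matrix (Fin k) (Fin t) A) :
    (Fin t → A) →ₗ[Aᵐᵒᵖ] (Fin k → A) where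
  toFun x := fun i => ∑ l, F i l * x l
  map_add' x y := by
    funext i
    simp [mul_add, Finset.sum_add_distrib]
  map_smul' r x := by
    funext i
    simp only [RingHom.id_apply, Pi.smul_apply, MulOpposite.smul_eq_mul_unop]
    rw [Finset.sum_mul]
    exact Finset.sum_congr rfl fun l _ => (mul_assoc _ _ _).symm

theorem mulLeftLin_eq_sum {k t : ℕ} (F : Matrix (Fin k) (Fin t) A) (x : Fin t → A) :
    mulLeftLin F x = ∑ l, op (x l) • (fun i => F i l) := by
  funext i
  simp [mulLeftLin, op_smul_eq_mul]

theorem range_mulLeftLin {k t : ℕ} (F : Matrix (Fin k) (Fin t) A) :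
    LinearMap.range (mulLeftLin F) = colSpace F := by
  apply le_antisymm
  · rintro y ⟨x, rfl⟩
    rw [mulLeftLin_eq_sum]
    exact Submodule.sum_mem _ fun l _ =>
      Submodule.smul_mem _ _ (Submodule.subset_span ⟨l, rfl⟩)
  · rw [colSpace, Submodule.span_le]
    rintro y ⟨l, rfl⟩
    refine ⟨Pi.single l 1, ?_⟩
    funext i
    simp [mulLeftLin, Pi.single_apply, Finset.sum_ite_eq']

theorem injective_mulLeftLin {k t : ℕ} {F : Matrix (Fin k) (Fin t) A}
    (hFind : LinearIndependent Aᵐᵒᵖ (fun j => fun i => F i j)) :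
    Function.Injective (mulLeftLin F) := by
  rw [← LinearMap.ker_eq_bot, eq_bot_iff]
  intro x hx
  have h0 : ∑ l, op (x l) • (fun i => F i l) = 0 := by
    rw [← mulLeftLin_eq_sum]; exact hx
  have := Fintype.linearIndependent_iff.1 hFind (fun l => op (x l)) h0
  have hz : ∀ l, x l = 0 := fun l => by
    have := this l
    simpa using congrArg unop this
  simp only [Submodule.mem_bot]
  funext l; exact hz l

theorem map_colSpace_mulLeftLin {k t m : ℕ} (F : Matrix (Fin k) (Fin t) A)
    (B : Matrix (Fin t) (Fin m) A) :
    (colSpace B).map (mulLeftLin F) = colSpace (F * B) := by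
  rw [colSpace, Submodule.map_span, ← Set.range_comp]
  have : ((mulLeftLin F) ∘ fun j => fun i => B i j) = fun j => fun i => (F * B) i j := by
    funext j i
    simp [mulLeftLin, Matrix.mul_apply, Function.comp]
  rw [this, colSpace]

/-- Left-linear map given by right multiplication by `B` (row combination map). -/
def rowCombLin {t m : ℕ} (B : Matrix (Fin t) (Fin m) A) :
    (Fin t → A) →ₗ[A] (Fin m → A) where
  toFun a := fun j => ∑ i, a i * B i j
  map_add' x y := by
    funext j
    simp [add_mul, Finset.sum_add_distrib]
  map_smul' r x := by
    funext j
    simp only [RingHom.id_apply, Pi.smul_apply, smul_eq_mul]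
    rw [Finset.mul_sum]
    exact Finset.sum_congr rfl fun i _ => (mul_assoc _ _ _)

theorem rowCombLin_eq_sum {t m : ℕ} (B : Matrix (Fin t) (Fin m) A) (a : Fin t → A) :
    rowCombLin B a = ∑ i, a i • (fun j => B i j) := by
  funext j
  simp [rowCombLin]

theorem range_rowCombLin {t m : ℕ} (B : Matrix (Fin t) (Fin m) A) :
    LinearMap.range (rowCombLin B) = rowSpace B := by
  apply le_antisymm
  · rintro y ⟨x, rfl⟩
    rw [rowCombLin_eq_sum]
    exact Submodule.sum_mem _ fun i _ =>
      Submodule.smul_mem _ _ (Submodule.subset_span ⟨i, rfl⟩)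
  · rw [rowSpace, Submodule.span_le]
    rintro y ⟨i, rfl⟩
    refine ⟨Pi.single i 1, ?_⟩
    funext j
    simp [rowCombLin, Pi.single_apply, Finset.sum_ite_eq']

end MatAux


section DotAux

variable {A : Type u} [Ring A]

/-- The right-linear functional `x ↦ ∑ i, g i * x i`. -/
def dotLin {t : ℕ} (g : Fin t → A) : (Fin t → A) →ₗ[Aᵐᵒᵖ] A where
  toFun x := ∑ i, g i * x i
  map_add' x y := by simp [mul_add, Finset.sum_add_distrib]
  map_smul' r x := by
    simp only [RingHom.id_apply, Pi.smul_apply, MulOpposite.smul_eq_mul_unop]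
    rw [Finset.sum_mul]
    exact Finset.sum_congr rfl fun i _ => (mul_assoc _ _ _).symm

theorem dotLin_single {t : ℕ} (g : Fin t → A) (i0 : Fin t) :
    dotLin g (Pi.single i0 1) = g i0 := by
  simp [dotLin, Pi.single_apply, Finset.sum_ite_eq']

end DotAux

/-- Ranks: the row space of `B` has rank `t` iff the rows of `B` are left linearly
independent. -/
theorem rank_rowSpace_eq_iff {A : Type u} [Ring A] [StrongRankCondition A]
    (hSF : HasSF.{u, u} A) {t m : ℕ} (B : Matrix (Fin t) (Fin m) A) :
    Module.rank A ↥(rowSpace B) = t ↔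
      LinearIndependent A (fun i => fun j => B i j) := by
  haveI : Nontrivial A := nontrivial_of_invariantBasisNumber A
  constructor
  · intro hrank
    have hfree : Module.Free A ↥(LinearMap.range (rowCombLin B)) := by
      rw [range_rowCombLin]
      exact hSF (Fin m → A) inferInstance (rowSpace B)
    obtain ⟨M', hinf, hsup, ⟨e⟩⟩ := exists_compl_of_free_range (rowCombLin B) hfree
    have hfreeK : Module.Free A ↥(LinearMap.ker (rowCombLin B)) :=
      hSF (Fin t → A) inferInstance _
    have hfreeM' : Module.Free A ↥M' := Module.Free.of_equiv' hfree e
    have hrankM' : Module.rank A ↥M' = t := by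
      rw [← e.rank_eq, range_rowCombLin]
      exact hrank
    haveI := hfreeK; haveI := hfreeM'
    let bK := Module.Free.chooseBasis A ↥(LinearMap.ker (rowCombLin B))
    let bM' := Module.Free.chooseBasis A ↥M'
    have hle := card_add_card_le_rank (disjoint_iff.mpr hinf) bK bM'
    rw [rank_fin_fun] at hle
    have hcM' : Cardinal.mk (Module.Free.ChooseBasisIndex A ↥M') = (t : Cardinal) := by
      rw [← Module.Free.rank_eq_card_chooseBasisIndex, hrankM']
    rw [hcM'] at hle
    have hK0 : Cardinal.mk (Module.Free.ChooseBasisIndex A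
        ↥(LinearMap.ker (rowCombLin B))) = 0 := by
      by_contra h
      have h1 : 1 ≤ Cardinal.mk (Module.Free.ChooseBasisIndex A
          ↥(LinearMap.ker (rowCombLin B))) := Cardinal.one_le_iff_ne_zero.mpr h
      have h2 : (1 : Cardinal) + t ≤ (t : Cardinal) :=
        le_trans (add_le_add_left h1 _) hle
      have h3 : ((1 + t : ℕ) : Cardinal) ≤ ((t : ℕ) : Cardinal) := by push_cast; exact h2
      have := Nat.cast_le.mp h3
      omega
    haveI : IsEmpty (Module.Free.ChooseBasisIndex A
        ↥(LinearMap.ker (rowCombLin B))) := Cardinal.mk_eq_zero_iff.mp hK0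
    have hker : LinearMap.ker (rowCombLin B) = ⊥ := eq_bot_of_basis_isEmpty bK
    rw [Fintype.linearIndependent_iff]
    intro g hg
    have hg' : rowCombLin B g = 0 := by rw [rowCombLin_eq_sum]; exact hg
    have hg0 : g = 0 := by rwa [← LinearMap.mem_ker, hker, Submodule.mem_bot] at hg'
    intro i; rw [hg0]; rfl
  · intro hind
    show Module.rank A ↥(Submodule.span A (Set.range fun i => fun j => B i j)) = t
    rw [rank_span hind]
    have h := Cardinal.mk_range_eq_of_injective hind.injective
    simpa [Cardinal.mk_fintype, Cardinal.lift_natCast, Cardinal.lift_id] using h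

/-- The key equivalence: `colSpace B ≤ ⊤` is an algebraic extension iff the rows of `B`
are left linearly independent. -/
theorem isAlgExt_top_iff_indep {A : Type u} [Ring A] [StrongRankCondition A]
    [StrongRankCondition Aᵐᵒᵖ] (hSF : HasSF.{u, u} A) (hSFop : HasSF.{u, u} Aᵐᵒᵖ)
    {t m : ℕ} (B : Matrix (Fin t) (Fin m) A) :
    IsAlgExt (colSpace B) (⊤ : Submodule Aᵐᵒᵖ (Fin t → A)) ↔
      LinearIndependent A (fun i => fun j => B i j) := by
  haveI : Nontrivial A := nontrivial_of_invariantBasisNumber A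
  haveI : Nontrivial Aᵐᵒᵖ := nontrivial_of_invariantBasisNumber Aᵐᵒᵖ
  haveI : Module.Free Aᵐᵒᵖ (Fin t → A) := free_op_pi t
  constructor
  · intro halg
    by_contra hnind
    rw [Fintype.linearIndependent_iff] at hnind
    push_neg at hnind
    obtain ⟨g, hg0, i0, hgi0⟩ := hnind
    have hBker : colSpace B ≤ LinearMap.ker (dotLin g) := by
      rw [colSpace, Submodule.span_le]
      rintro y ⟨j, rfl⟩
      have hj : ∑ i, g i * B i j = 0 := by
        have := congrFun hg0 j
        simpa using this
      simpa [dotLin] using hj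
    have hfreer : Module.Free Aᵐᵒᵖ ↥(LinearMap.range (dotLin g)) :=
      hSFop A free_op_self _
    obtain ⟨M', hinf, hsup, ⟨e⟩⟩ := exists_compl_of_free_range (dotLin g) hfreer
    have hff : IsFreeFactor (LinearMap.ker (dotLin g)) (⊤ : Submodule Aᵐᵒᵖ (Fin t → A)) :=
      ⟨le_top, M', le_top, hinf, hsup, Module.Free.of_equiv' hfreer e⟩
    have hkt := halg.2 _ hBker hff
    have hmem : Pi.single i0 1 ∈ LinearMap.ker (dotLin g) := hkt ▸ Submodule.mem_top
    rw [LinearMap.mem_ker, dotLin_single] at hmem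
    exact hgi0 hmem
  · intro hind
    refine ⟨le_top, fun L hBL hff => ?_⟩
    by_contra hne
    obtain ⟨-, L', hL'le, hinf, hsup, hfreeL'⟩ := hff
    have hL'ne : L' ≠ ⊥ := by
      rintro rfl
      rw [sup_bot_eq] at hsup
      exact hne hsup
    have hfreeL : Module.Free Aᵐᵒᵖ ↥L := hSFop (Fin t → A) (free_op_pi t) L
    haveI := hfreeL; haveI := hfreeL'
    let bL := Module.Free.chooseBasis Aᵐᵒᵖ ↥L
    let bL' := Module.Free.chooseBasis Aᵐᵒᵖ ↥L'
    have hle := card_add_card_le_rank (disjoint_iff.mpr hinf) bL bL'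
    rw [rank_op_pi] at hle
    haveI hne' : Nonempty (Module.Free.ChooseBasisIndex Aᵐᵒᵖ ↥L') := by
      by_contra h
      rw [not_nonempty_iff] at h
      exact hL'ne (eq_bot_of_basis_isEmpty bL')
    have h1le : 1 ≤ Cardinal.mk (Module.Free.ChooseBasisIndex Aᵐᵒᵖ ↥L') :=
      Cardinal.one_le_iff_ne_zero.mpr (Cardinal.mk_ne_zero _)
    have hfin : Cardinal.mk (Module.Free.ChooseBasisIndex Aᵐᵒᵖ ↥L) < Cardinal.aleph0 :=
      lt_of_le_of_lt (le_trans (self_le_add_right _ _) hle) (Cardinal.nat_lt_aleph0 t)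
    haveI : Fintype (Module.Free.ChooseBasisIndex Aᵐᵒᵖ ↥L) :=
      (Cardinal.lt_aleph0_iff_fintype.mp hfin).some
    have hcard : Fintype.card (Module.Free.ChooseBasisIndex Aᵐᵒᵖ ↥L) < t := by
      rw [Cardinal.mk_fintype] at hle
      have h2 : ((Fintype.card (Module.Free.ChooseBasisIndex Aᵐᵒᵖ ↥L) + 1 : ℕ) : Cardinal)
          ≤ ((t : ℕ) : Cardinal) := by
        push_cast
        exact le_trans (add_le_add_right h1le _) hle
      have := Nat.cast_le.mp h2
      omega
    have hnotind : ¬ LinearIndependent A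
        (fun i : Fin t => fun l : Module.Free.ChooseBasisIndex Aᵐᵒᵖ ↥L =>
          ((bL l : Fin t → A) i)) := by
      intro hi
      have hcle := hi.cardinal_lift_le_rank
      rw [rank_fun'] at hcle
      simp only [Cardinal.mk_fintype, Fintype.card_fin, Cardinal.lift_natCast,
        Nat.cast_le] at hcle
      omega
    rw [Fintype.linearIndependent_iff] at hnotind
    push_neg at hnotind
    obtain ⟨g, hg0, i0, hgi0⟩ := hnotind
    have hcol : ∀ j, (fun i => B i j) ∈ L := fun j => hBL (Submodule.subset_span ⟨j, rfl⟩)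
    have hrel : ∀ l, ∑ i, g i * (bL l : Fin t → A) i = 0 := by
      intro l
      have := congrFun hg0 l
      simpa using this
    have hBrel : ∀ j, ∑ i, g i * B i j = 0 := by
      intro j
      set c : Module.Free.ChooseBasisIndex Aᵐᵒᵖ ↥L → Aᵐᵒᵖ :=
        fun l => bL.repr ⟨fun i => B i j, hcol j⟩ l with hc
      have hrepr : (⟨fun i => B i j, hcol j⟩ : ↥L) = ∑ l, c l • bL l :=
        (bL.sum_repr _).symm
      have hB : ∀ i, B i j = ∑ l, (bL l : Fin t → A) i * (c l).unop := by
        intro i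
        have hval := congrArg Subtype.val hrepr
        have : (fun i => B i j) = ∑ l, ((c l • bL l : ↥L) : Fin t → A) := by
          simpa using hval
        have := congrFun this i
        rw [this, Finset.sum_apply]
        exact Finset.sum_congr rfl fun l _ => rfl
      calc ∑ i, g i * B i j
          = ∑ i, ∑ l, g i * ((bL l : Fin t → A) i * (c l).unop) := by
            refine Finset.sum_congr rfl fun i _ => ?_
            rw [hB i, Finset.mul_sum]
        _ = ∑ l, ∑ i, (g i * (bL l : Fin t → A) i) * (c l).unop := by
            rw [Finset.sum_comm]
            exact Finset.sum_congr rfl fun l _ =>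
              Finset.sum_congr rfl fun i _ => (mul_assoc _ _ _).symm
        _ = ∑ l, (∑ i, g i * (bL l : Fin t → A) i) * (c l).unop := by
            exact Finset.sum_congr rfl fun l _ => (Finset.sum_mul _ _ _).symm
        _ = 0 := by simp [hrel]
    have hzero : ∑ i, g i • (fun j => B i j) = 0 := by
      funext j
      simpa using hBrel j
    exact hgi0 (Fintype.linearIndependent_iff.mp hind g hzero i0)

theorem isAlgExt_iff_rank_qDual_eq {A : Type u} [Ring A]
    [StrongRankCondition A] [StrongRankCondition Aᵐᵒᵖ]
    (hSF : HasSF.{u, u} A) (hSFop : HasSF.{u, u} Aᵐᵒᵖ)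
    {k m t : ℕ} (Q : Matrix (Fin k) (Fin m) A)
    (F : Matrix (Fin k) (Fin t) A)
    (hFind : LinearIndependent Aᵐᵒᵖ (fun j => fun i => F i j))
    (hQF : colSpace Q ≤ colSpace F)
    (B : Matrix (Fin t) (Fin m) A) (hB : Q = F * B) :
    IsAlgExt (colSpace Q) (colSpace F) ↔ Module.rank A ↥(rowSpace B) = t := by
  have hinj := injective_mulLeftLin hFind
  have h1 : IsAlgExt (colSpace Q) (colSpace F) ↔
      IsAlgExt (colSpace B) (⊤ : Submodule Aᵐᵒᵖ (Fin t → A)) := by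
    have h := isAlgExt_map_iff (mulLeftLin F) hinj (colSpace B)
    rw [map_colSpace_mulLeftLin, ← hB, range_mulLeftLin] at h
    exact h
  rw [h1]
  exact (isAlgExt_top_iff_indep hSF hSFop B).trans (rank_rowSpace_eq_iff hSF B).symm
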